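/- The group ℤ × ℤ/2ℤ is virtually free, but for every positive integer k and every finite inverse-closed generating set S of ℤ × ℤ/2ℤ, the Cayley graph Cay(ℤ × ℤ/2ℤ, S) is not k-geodetic. -/

import Mathlib

/-- A connected simple graph is `k`-geodetic if between any pair of vertices there are
at most `k` geodesics (walks of minimal length between their endpoints). -/
def IsKGeodetic {V : Type*} (X : SimpleGraph V) (k : ℕ) : Prop :=
  X.Connected ∧ ∀ (u v : V) (s : Finset (X.Walk u v)),
    (∀ p ∈ s, p.length = X.dist u v) → s.card ≤ k

/-- The (undirected) Cayley graph of a group `G` with respect to a subset `S`. -/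
def cayleyGraph (G : Type*) [Group G] (S : Set G) : SimpleGraph G :=
  SimpleGraph.fromRel (fun g h => g⁻¹ * h ∈ S)

noncomputable section
namespace Z2Aux

abbrev G := Multiplicative (ℤ × ZMod 2)

def sndHom : G →* Multiplicative (ZMod 2) :=
  AddMonoidHom.toMultiplicative (AddMonoidHom.snd ℤ (ZMod 2))

def inlHom : Multiplicative ℤ →* G :=
  AddMonoidHom.toMultiplicative (AddMonoidHom.inl ℤ (ZMod 2))

instance : IsFreeGroup (Multiplicative ℤ) := by
  refine IsFreeGroup.ofMulEquiv (G := FreeGroup Unit)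
    (MonoidHom.toMulEquiv (FreeGroup.lift fun _ => Multiplicative.ofAdd (1:ℤ))
      ((zpowersHom (FreeGroup Unit)) (FreeGroup.of ())) ?_ ?_)
  · ext z
    rw [MonoidHom.comp_apply, FreeGroup.lift_apply_of]
    simp
  · apply MonoidHom.ext_mint
    rw [MonoidHom.comp_apply]
    simp [FreeGroup.lift_apply_of]

lemma sndHom_apply (g : G) : sndHom g = Multiplicative.ofAdd (Multiplicative.toAdd g).2 := rfl

lemma part1 : ∃ H : Subgroup G, H.FiniteIndex ∧ IsFreeGroup H := by
  refine ⟨sndHom.ker, inferInstance, ?_⟩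
  have hinj : Function.Injective inlHom := by
    intro a b h
    simpa [inlHom, Prod.ext_iff] using h
  have hker : ∀ n : Multiplicative ℤ, inlHom n ∈ sndHom.ker := by
    intro n
    rw [MonoidHom.mem_ker, sndHom_apply]
    rfl
  have hsurj : Function.Surjective (inlHom.codRestrict sndHom.ker hker) := by
    rintro ⟨g, hg⟩
    refine ⟨Multiplicative.ofAdd (Multiplicative.toAdd g).1, ?_⟩
    have h2 : (Multiplicative.toAdd g).2 = 0 := by
      have := MonoidHom.mem_ker.mp hg
      rw [sndHom_apply] at this
      exact Multiplicative.ofAdd.injective this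
    apply Subtype.ext
    show Multiplicative.ofAdd ((Multiplicative.toAdd g).1, (0 : ZMod 2)) = g
    conv_rhs => rw [← ofAdd_toAdd g]
    exact congrArg _ (Prod.ext rfl h2.symm)
  exact IsFreeGroup.ofMulEquiv
    (MulEquiv.ofBijective (inlHom.codRestrict sndHom.ker hker)
      ⟨fun a b h => hinj (congrArg Subtype.val h), hsurj⟩)



def pr (g : G) : ℤ := (Multiplicative.toAdd g).1

lemma pr_mul (u v : G) : pr (u * v) = pr u + pr v := rfl

lemma pr_one : pr 1 = 0 := rfl

lemma pr_inv (u : G) : pr u⁻¹ = - pr u := rfl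

lemma pr_pow (u : G) (n : ℕ) : pr (u ^ n) = n * pr u := by
  induction n with
  | zero => simp [pr_one]
  | succ n ih => rw [pow_succ, pr_mul, ih]; push_cast; ring

variable {S : Set G}

lemma adj_step (hS : ∀ s ∈ S, s⁻¹ ∈ S) {u v : G} (h : (cayleyGraph G S).Adj u v) :
    u⁻¹ * v ∈ S := by
  rw [cayleyGraph, SimpleGraph.fromRel_adj] at h
  rcases h.2 with h1 | h1
  · exact h1
  · simpa using hS _ h1

lemma adj_mul (h1 : (1:G) ∉ S) {x : G} (hx : x ∈ S) (u : G) :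
    (cayleyGraph G S).Adj u (u * x) := by
  rw [cayleyGraph, SimpleGraph.fromRel_adj]
  constructor
  · intro h
    apply h1
    have : x = 1 := by
      have := congrArg (u⁻¹ * ·) h
      simpa using this.symm
    rwa [this] at hx
  · left
    simpa using hx

lemma walk_bound (hS : ∀ s ∈ S, s⁻¹ ∈ S) {a : ℤ} (ha : ∀ s ∈ S, pr s ≤ a)
    {u v : G} (p : (cayleyGraph G S).Walk u v) : pr v - pr u ≤ a * p.length := by
  induction p with
  | nil => simp
  | @cons u w v h q ih =>
    have hm := adj_step hS h
    have h1 : pr w - pr u ≤ a := by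
      have := ha _ hm
      rw [pr_mul, pr_inv] at this
      linarith
    rw [SimpleGraph.Walk.length_cons]
    push_cast
    nlinarith [ih]

lemma walk_rigid (hS : ∀ s ∈ S, s⁻¹ ∈ S) {a : ℤ} {x : G} (ha : ∀ s ∈ S, pr s ≤ a)
    (hx : ∀ s ∈ S, pr s = a → s = x) {u v : G} (p : (cayleyGraph G S).Walk u v)
    (heq : pr v - pr u = a * p.length) : v = u * x ^ p.length := by
  induction p with
  | nil => simp
  | @cons u w v h q ih =>
    have hm := adj_step hS h
    have h1 : pr w - pr u ≤ a := by
      have := ha _ hm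
      rw [pr_mul, pr_inv] at this
      linarith
    have hq := walk_bound hS ha q
    rw [SimpleGraph.Walk.length_cons] at heq
    push_cast at heq
    have h2 : pr w - pr u = a := by nlinarith
    have h3 : u⁻¹ * w = x := hx _ hm (by rw [pr_mul, pr_inv]; linarith)
    have hw : w = u * x := by rw [← h3]; group
    have h4 : pr v - pr w = a * q.length := by nlinarith
    have hv : v = u * x * x ^ q.length := by rw [← hw]; exact ih h4
    rw [SimpleGraph.Walk.length_cons, pow_succ, mul_comm (x ^ q.length) x, ← mul_assoc]
    exact hv


open SimpleGraph Walk

def xpath (h1 : (1:G) ∉ S) {x : G} (hx : x ∈ S) : ∀ (u : G) (m : ℕ),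
    (cayleyGraph G S).Walk u (u * x ^ m)
  | u, 0 => Walk.nil.copy rfl (by simp)
  | u, m+1 =>
    (Walk.cons (adj_mul h1 hx u) (xpath h1 hx (u * x) m)).copy rfl
      (by rw [pow_succ', ← mul_assoc])

@[simp] lemma xpath_length (h1 : (1:G) ∉ S) {x : G} (hx : x ∈ S) (u : G) (m : ℕ) :
    (xpath h1 hx u m).length = m := by
  induction m generalizing u with
  | zero => simp [xpath]
  | succ m ih => simp [xpath, ih]

lemma xpath_getVert (h1 : (1:G) ∉ S) {x : G} (hx : x ∈ S) (u : G) (m j : ℕ) :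
    (xpath h1 hx u m).getVert j = u * x ^ (min j m) := by
  induction m generalizing u j with
  | zero =>
    rw [xpath]
    cases j <;> simp [Walk.getVert]
  | succ m ih =>
    rw [xpath, Walk.getVert_copy]
    cases j with
    | zero => simp
    | succ j =>
      rw [Walk.getVert_cons_succ, ih, Nat.succ_min_succ, pow_succ', ← mul_assoc]

def mid (h1 : (1:G) ∉ S) {x y : G} (hx : x ∈ S) (hy : y ∈ S) (i m : ℕ) :
    (cayleyGraph G S).Walk 1 (x ^ i * y * x ^ m) :=
  ((xpath h1 hx 1 i).append
      (Walk.cons (adj_mul h1 hy (1 * x ^ i)) (xpath h1 hx (1 * x ^ i * y) m))).copy rfl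
    (by rw [one_mul])

@[simp] lemma mid_length (h1 : (1:G) ∉ S) {x y : G} (hx : x ∈ S) (hy : y ∈ S) (i m : ℕ) :
    (mid h1 hx hy i m).length = i + 1 + m := by
  simp [mid]; omega

lemma mid_getVert_le (h1 : (1:G) ∉ S) {x y : G} (hx : x ∈ S) (hy : y ∈ S) (i m j : ℕ)
    (hj : j ≤ i) : (mid h1 hx hy i m).getVert j = x ^ j := by
  rw [mid, Walk.getVert_copy, Walk.getVert_append]
  rcases lt_or_eq_of_le hj with h | h
  · rw [if_pos (by simpa using h), xpath_getVert, one_mul, min_eq_left hj]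
  · subst h
    rw [if_neg (by simp), xpath_length, Nat.sub_self, Walk.getVert_zero, one_mul]

lemma mid_getVert_succ (h1 : (1:G) ∉ S) {x y : G} (hx : x ∈ S) (hy : y ∈ S) (i m : ℕ) :
    (mid h1 hx hy i m).getVert (i + 1) = x ^ i * y := by
  rw [mid, Walk.getVert_copy, Walk.getVert_append]
  rw [if_neg (by simp), xpath_length, Nat.add_sub_cancel_left, Walk.getVert_cons_succ,
    Walk.getVert_zero, one_mul]


def wlk (h1 : (1:G) ∉ S) {x y : G} (hx : x ∈ S) (hy : y ∈ S) (n i : ℕ) :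
    (cayleyGraph G S).Walk 1 (x ^ n * y) :=
  (mid h1 hx hy (min i n) (n - min i n)).copy rfl (by
    have h : x ^ min i n * x ^ (n - min i n) = x ^ n := by
      rw [← pow_add, Nat.add_sub_cancel' (min_le_right i n)]
    rw [mul_right_comm, h])

lemma wlk_length (h1 : (1:G) ∉ S) {x y : G} (hx : x ∈ S) (hy : y ∈ S) (n i : ℕ) :
    (wlk h1 hx hy n i).length = n + 1 := by
  rw [wlk, Walk.length_copy, mid_length]
  have := min_le_right i n
  omega

lemma wlk_ne (h1 : (1:G) ∉ S) {x y : G} (hx : x ∈ S) (hy : y ∈ S) (hxy : x ≠ y)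
    {n i j : ℕ} (hij : i < j) (hjn : j ≤ n) :
    wlk h1 hx hy n i ≠ wlk h1 hx hy n j := by
  intro heq
  have hg := congrArg (fun p => SimpleGraph.Walk.getVert p (i + 1)) heq
  simp only [wlk, Walk.getVert_copy] at hg
  rw [min_eq_left (by omega : i ≤ n), min_eq_left hjn] at hg
  rw [mid_getVert_succ, mid_getVert_le _ _ _ _ _ _ (by omega)] at hg
  rw [pow_succ] at hg
  exact hxy (mul_left_cancel hg).symm

lemma many_geodesics (h1 : (1:G) ∉ S) {x y : G} (hx : x ∈ S) (hy : y ∈ S) (hxy : x ≠ y)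
    {n k : ℕ} (hdist : (cayleyGraph G S).dist 1 (x ^ n * y) = n + 1)
    (hcard : ∀ (u v : G) (s : Finset ((cayleyGraph G S).Walk u v)),
      (∀ p ∈ s, p.length = (cayleyGraph G S).dist u v) → s.card ≤ k) :
    n + 1 ≤ k := by
  classical
  set s : Finset ((cayleyGraph G S).Walk 1 (x ^ n * y)) :=
    (Finset.range (n + 1)).image (wlk h1 hx hy n) with hs
  have hinj : Set.InjOn (wlk h1 hx hy n) (Finset.range (n + 1)) := by
    intro i hi j hj hij
    simp only [Finset.coe_range, Set.mem_Iio] at hi hj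
    by_contra hne
    rcases Nat.lt_or_ge i j with h | h
    · exact wlk_ne h1 hx hy hxy h (by omega) hij
    · exact wlk_ne h1 hx hy hxy (by omega) (by omega) hij.symm
  have hcards : s.card = n + 1 := by
    rw [hs, Finset.card_image_of_injOn hinj, Finset.card_range]
  have := hcard 1 (x ^ n * y) s (by
    intro p hp
    rw [hs] at hp
    obtain ⟨i, _, rfl⟩ := Finset.mem_image.mp hp
    rw [wlk_length, hdist])
  omega


def prHom : G →* Multiplicative ℤ :=
  AddMonoidHom.toMultiplicative (AddMonoidHom.fst ℤ (ZMod 2))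

lemma final_contra (hS : ∀ s ∈ S, s⁻¹ ∈ S) (h1 : (1:G) ∉ S) {x y : G} (hx : x ∈ S)
    (hy : y ∈ S) (hxy : x ≠ y) {n k : ℕ} (hnk : k ≤ n)
    (hlb : ∀ p : (cayleyGraph G S).Walk 1 (x ^ n * y), n + 1 ≤ p.length)
    (hcard : ∀ (u v : G) (s : Finset ((cayleyGraph G S).Walk u v)),
      (∀ p ∈ s, p.length = (cayleyGraph G S).dist u v) → s.card ≤ k) : False := by
  have hub : (cayleyGraph G S).dist 1 (x ^ n * y) ≤ n + 1 := by
    have := SimpleGraph.dist_le (wlk h1 hx hy n 0)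
    rwa [wlk_length] at this
  have hreach : (cayleyGraph G S).Reachable 1 (x ^ n * y) := ⟨wlk h1 hx hy n 0⟩
  obtain ⟨p, hp⟩ := hreach.exists_walk_length_eq_dist
  have hdist : (cayleyGraph G S).dist 1 (x ^ n * y) = n + 1 := by
    refine le_antisymm hub ?_
    rw [← hp]
    exact hlb p
  have := many_geodesics h1 hx hy hxy hdist hcard
  omega

lemma part2 (k : ℕ) (hk : 0 < k) (S : Set G) (hfin : S.Finite) (hS : ∀ s ∈ S, s⁻¹ ∈ S)
    (h1 : (1:G) ∉ S) (hgen : Subgroup.closure S = ⊤) :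
    ¬ IsKGeodetic (cayleyGraph G S) k := by
  rintro ⟨hconn, hcard⟩
  have hSne : S.Nonempty := by
    rcases S.eq_empty_or_nonempty with h | h
    · rw [h, Subgroup.closure_empty] at hgen
      exact absurd hgen bot_ne_top
    · exact h
  obtain ⟨x, hxS, hmax⟩ := hfin.toFinset.exists_max_image pr (by simpa using hSne)
  rw [Set.Finite.mem_toFinset] at hxS
  have hmax' : ∀ s ∈ S, pr s ≤ pr x := fun s hs => hmax s (hfin.mem_toFinset.mpr hs)
  set a := pr x with ha
  have ha0 : 0 < a := by
    by_contra hcon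
    push_neg at hcon
    have hle : Subgroup.closure S ≤ prHom.ker := by
      rw [Subgroup.closure_le]
      intro s hs
      have h1' := hmax' s hs
      have h2' := hmax' s⁻¹ (hS s hs)
      rw [pr_inv] at h2'
      have h0 : pr s = 0 := by omega
      simp only [SetLike.mem_coe, MonoidHom.mem_ker]
      show Multiplicative.ofAdd (pr s) = 1
      rw [h0]
      rfl
    rw [hgen, top_le_iff] at hle
    have hmem : Multiplicative.ofAdd ((1:ℤ), (0:ZMod 2)) ∈ prHom.ker := by
      rw [hle]; exact Subgroup.mem_top _
    have : Multiplicative.ofAdd (1:ℤ) = 1 := hmem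
    simpa using Multiplicative.ofAdd.injective this
  by_cases hA : ∃ y ∈ S, y ≠ x ∧ pr y = a
  · -- two distinct maximal-projection generators
    obtain ⟨y, hyS, hyx, hya⟩ := hA
    refine final_contra hS h1 hxS hyS hyx.symm le_rfl ?_ hcard
    intro p
    have hb := walk_bound hS hmax' p
    have hprg : pr (x ^ k * y) = (k : ℤ) * a + a := by rw [pr_mul, pr_pow, hya, ← ha]
    rw [hprg, pr_one, sub_zero] at hb
    have hle2 : ((k:ℤ) + 1) ≤ p.length := by
      refine le_of_mul_le_mul_left ?_ ha0
      nlinarith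
    exact_mod_cast hle2
  · push_neg at hA
    have hxuniq : ∀ s ∈ S, pr s = a → s = x := by
      intro s hs hpa
      by_contra hne
      exact hA s hs hne hpa
    have hnot : ¬ S ⊆ {x, x⁻¹} := by
      intro hsub
      have hle : Subgroup.closure S ≤ Subgroup.zpowers x := by
        rw [Subgroup.closure_le]
        intro s hs
        rcases hsub hs with h | h
        · rw [h]; exact Subgroup.mem_zpowers x
        · rw [Set.mem_singleton_iff] at h
          rw [h]
          exact Subgroup.inv_mem _ (Subgroup.mem_zpowers x)
      rw [hgen, top_le_iff] at hle
      obtain ⟨m, hm⟩ := (Subgroup.mem_zpowers_iff).mp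
        (hle ▸ Subgroup.mem_top (Multiplicative.ofAdd ((0:ℤ), (1:ZMod 2))))
      obtain ⟨m', hm'⟩ := (Subgroup.mem_zpowers_iff).mp
        (hle ▸ Subgroup.mem_top (Multiplicative.ofAdd ((1:ℤ), (0:ZMod 2))))
      have hm1 : m • Multiplicative.toAdd x = ((0:ℤ), (1:ZMod 2)) := by
        rw [← toAdd_zpow, hm]; rfl
      have hm1' : m' • Multiplicative.toAdd x = ((1:ℤ), (0:ZMod 2)) := by
        rw [← toAdd_zpow, hm']; rfl
      have hc1 : m * (Multiplicative.toAdd x).1 = 0 := by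
        have := congrArg Prod.fst hm1
        simpa [smul_eq_mul] using this
      have hc2 : m' * (Multiplicative.toAdd x).1 = 1 := by
        have := congrArg Prod.fst hm1'
        simpa [smul_eq_mul] using this
      have hcne : (Multiplicative.toAdd x).1 ≠ 0 := by
        intro h0
        rw [h0, mul_zero] at hc2
        exact one_ne_zero hc2.symm
      have hm0 : m = 0 := by
        rcases mul_eq_zero.mp hc1 with h | h
        · exact h
        · exact absurd h hcne
      have := congrArg Prod.snd hm1
      rw [hm0, zero_smul] at this
      have h01 : (0 : ZMod 2) = 1 := by simpa using this
      exact absurd h01 (by decide)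
    obtain ⟨z, hzS, hz⟩ := Set.not_subset.mp hnot
    simp only [Set.mem_insert_iff, Set.mem_singleton_iff, not_or] at hz
    obtain ⟨y, hyS, hyx, hyb⟩ : ∃ y ∈ S, y ≠ x ∧ 0 ≤ pr y := by
      rcases le_or_gt 0 (pr z) with h0 | h0
      · exact ⟨z, hzS, hz.1, h0⟩
      · refine ⟨z⁻¹, hS z hzS, ?_, ?_⟩
        · intro h
          exact hz.2 (by rw [← h]; rw [inv_inv])
        · rw [pr_inv]; omega
    have hblt : pr y < a := lt_of_le_of_ne (hmax' y hyS) (fun h => hyx (hxuniq y hyS h))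
    refine final_contra hS h1 hxS hyS (fun h => hyx h.symm) le_rfl ?_ hcard
    intro p
    have hb := walk_bound hS hmax' p
    have hprg : pr (x ^ k * y) = (k : ℤ) * a + pr y := by rw [pr_mul, pr_pow, ← ha]
    rw [hprg, pr_one, sub_zero] at hb
    rcases hyb.lt_or_eq with hbpos | hbzero
    · -- 0 < pr y
      have hlt : (k : ℤ) < p.length := by
        refine lt_of_mul_lt_mul_left ?_ ha0.le
        nlinarith
      exact_mod_cast hlt
    · -- pr y = 0
      have hlek : (k : ℤ) ≤ p.length := by
        refine le_of_mul_le_mul_left ?_ ha0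
        nlinarith
      have hnk : k ≤ p.length := by exact_mod_cast hlek
      rcases Nat.lt_or_ge k p.length with h | h
      · omega
      · exfalso
        have hlen : p.length = k := by omega
        have heq : pr (x ^ k * y) - pr 1 = a * p.length := by
          rw [hprg, pr_one, sub_zero, ← hbzero, hlen]
          ring
        have hrig := walk_rigid hS hmax' hxuniq p heq
        rw [hlen, one_mul] at hrig
        have : y = 1 := by
          apply mul_left_cancel (a := x ^ k)
          rw [hrig, mul_one]
        exact h1 (this ▸ hyS)


end Z2Aux
end

/-- The group `ℤ × ℤ/2ℤ` (written multiplicatively) is virtually free,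
but for every positive integer `k` and every finite inverse-closed generating set `S`,
its Cayley graph is not `k`-geodetic. -/
theorem zmod2_prod_int_virtually_free_not_kgeodetic :
    (∃ H : Subgroup (Multiplicative (ℤ × ZMod 2)), H.FiniteIndex ∧ IsFreeGroup H) ∧
    ∀ (k : ℕ), 0 < k → ∀ S : Set (Multiplicative (ℤ × ZMod 2)),
      S.Finite → (∀ s ∈ S, s⁻¹ ∈ S) → (1 : Multiplicative (ℤ × ZMod 2)) ∉ S →
      Subgroup.closure S = ⊤ →
      ¬ IsKGeodetic (cayleyGraph (Multiplicative (ℤ × ZMod 2)) S) k := by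
  exact ⟨Z2Aux.part1, fun k hk S hfin hS h1 hgen => Z2Aux.part2 k hk S hfin hS h1 hgen⟩
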